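/- Let ℓ be a prime with ℓ ≡ 5 (mod 8), let r and m be positive integers, and suppose the symplectic group Sp_{2m}(𝔽_ℓ) contains an element of exact order 2^r. Then 2^{r-1} ≤ 2m. -/

import Mathlib

open Polynomial Matrix

private lemma pow8aux (ℓ : ℕ) (h5 : ℓ % 8 = 5) : ∀ i, ℓ ^ i % 8 = 1 ∨ ℓ ^ i % 8 = 5 := by
  intro i
  induction i with
  | zero => left; rfl
  | succ n ih =>
    rw [pow_succ, Nat.mul_mod, h5]
    rcases ih with h | h <;> rw [h] <;> simp

private lemma int_pow_two_pow (ℓ : ℕ) (h5 : ℓ % 8 = 5) (s : ℕ) :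
    ((ℓ : ℤ)) ^ (2 ^ s) ≡ 1 + 2 ^ (s + 2) [ZMOD 2 ^ (s + 3)] := by
  induction s with
  | zero =>
    have h : (ℓ : ℤ) % 8 = 5 := by omega
    show _ % _ = _ % _
    norm_num [h]
  | succ s ih =>
    rw [Int.ModEq] at ih ⊢
    have hd : ((2:ℤ) ^ (s+3)) ∣ (1 + 2 ^ (s + 2)) - (ℓ:ℤ) ^ (2 ^ s) :=
      Int.ModEq.dvd ih
    obtain ⟨c, hc⟩ := hd
    have hℓ : ((ℓ:ℤ)) ^ (2 ^ s) = 1 + 2 ^ (s+2) - 2 ^ (s+3) * c := by linarith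
    have hpow : ((ℓ:ℤ)) ^ (2 ^ (s+1)) = ((ℓ:ℤ) ^ (2 ^ s)) ^ 2 := by
      rw [pow_succ, pow_mul]
    rw [← Int.ModEq]
    rw [Int.modEq_iff_dvd, hpow, hℓ]
    exact ⟨-(2^s) - 2^(s+2)*c^2 + c + 2^(s+2)*c, by ring⟩

private lemma one_add_pow_modeq (x : ℤ) (n : ℤ) (h : n ∣ x ^ 2) :
    ∀ T : ℕ, (1 + x) ^ T ≡ 1 + T * x [ZMOD n] := by
  intro T
  induction T with
  | zero => simp
  | succ T ih =>
    have h1 : (1 + x) ^ (T + 1) = (1 + x) ^ T * (1 + x) := pow_succ _ _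
    have h2 : (1 + (T:ℤ) * x) * (1 + x) ≡ 1 + ((T:ℤ) + 1) * x [ZMOD n] := by
      rw [Int.modEq_iff_dvd]
      rw [show (1 + ((T:ℤ)+1) * x) - (1 + (T:ℤ) * x) * (1 + x) = -(T * x^2) by ring]
      exact dvd_neg.mpr (h.mul_left _)
    calc (1 + x) ^ (T+1) = (1 + x) ^ T * (1 + x) := h1
      _ ≡ (1 + T * x) * (1 + x) [ZMOD n] := Int.ModEq.mul ih (Int.ModEq.refl _)
      _ ≡ 1 + ((T:ℤ) + 1) * x [ZMOD n] := h2
      _ = 1 + ((T + 1 : ℕ) : ℤ) * x := by push_cast; ring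

/-- if `ℓ ≡ 5 mod 8` and `ℓ^k ≡ 1 mod 2^r` with `k < 2^(r-2)` and `3 ≤ r` then `k = 0`. -/
private lemma key_order (ℓ r k : ℕ) (h5 : ℓ % 8 = 5) (hr3 : 3 ≤ r)
    (hk : k < 2 ^ (r - 2)) (h1 : ℓ ^ k ≡ 1 [MOD 2 ^ r]) : k = 0 := by
  by_contra hk0
  obtain ⟨s, u, hu, rfl⟩ := Nat.exists_eq_pow_mul_and_not_dvd hk0 2 (by norm_num)
  -- s + 3 ≤ r
  have hsle : 2 ^ s ≤ 2 ^ s * u := Nat.le_mul_of_pos_right _ (Nat.pos_of_ne_zero (by rintro rfl; simp at hu))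
  have hs : s < r - 2 := by
    by_contra hs
    exact absurd (lt_of_le_of_lt (le_trans (Nat.pow_le_pow_right (by norm_num) (by omega)) hsle) hk)
      (lt_irrefl _)
  have hs3 : s + 3 ≤ r := by omega
  -- cast h1 to ℤ, reduce mod 2^(s+3)
  have h1' : ((ℓ:ℤ)) ^ (2 ^ s * u) ≡ 1 [ZMOD 2 ^ (s+3)] := by
    have hd : ((2:ℤ) ^ r) ∣ (1 : ℤ) - (ℓ:ℤ) ^ (2 ^ s * u) := by
      have := (Nat.modEq_iff_dvd).mp h1
      push_cast at this ⊢
      exact this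
    rw [Int.modEq_iff_dvd]
    exact dvd_trans (pow_dvd_pow 2 hs3) hd
  -- compute ℓ^(2^s u) mod 2^(s+3)
  have h2 : ((ℓ:ℤ)) ^ (2 ^ s * u) ≡ (1 + 2 ^ (s+2)) ^ u [ZMOD 2 ^ (s+3)] := by
    rw [pow_mul]
    exact Int.ModEq.pow u (int_pow_two_pow ℓ h5 s)
  have h3 : ((1:ℤ) + 2 ^ (s+2)) ^ u ≡ 1 + u * 2 ^ (s+2) [ZMOD 2 ^ (s+3)] := by
    apply one_add_pow_modeq
    exact ⟨2 ^ (s+1), by ring⟩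
  obtain ⟨v, hv⟩ : Odd u := Nat.odd_iff.mpr (by omega)
  have h4 : (1 : ℤ) + (u:ℤ) * 2 ^ (s+2) ≡ 1 + 2 ^ (s+2) [ZMOD 2 ^ (s+3)] := by
    rw [Int.modEq_iff_dvd]
    refine ⟨-v, ?_⟩
    have : (u : ℤ) = 2 * v + 1 := by exact_mod_cast congrArg (Nat.cast : ℕ → ℤ) hv
    rw [this]; ring
  have hfin : (1:ℤ) ≡ 1 + 2 ^ (s+2) [ZMOD 2 ^ (s+3)] :=
    (h1'.symm.trans h2).trans (h3.trans h4)
  have hdvd : ((2:ℤ) ^ (s+3)) ∣ 2 ^ (s+2) := by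
    have := Int.ModEq.dvd hfin.symm
    simpa using this
  have hle := Int.le_of_dvd (by positivity) hdvd
  have : (2:ℤ) ^ (s+2) < 2 ^ (s+3) := by
    have : (0:ℤ) < 2 ^ (s+2) := by positivity
    calc (2:ℤ) ^ (s+2) < 2 ^ (s+2) + 2 ^ (s+2) := by linarith
      _ = 2 ^ (s+3) := by ring
  omega

private lemma eval_charpoly'' {n : Type*} [DecidableEq n] [Fintype n] {K : Type*} [CommRing K]
    (A : Matrix n n K) (x : K) : A.charpoly.eval x = (x • (1 : Matrix n n K) - A).det := by
  have h : A.charpoly.eval x = (Polynomial.evalRingHom x) (Matrix.charmatrix A).det := rfl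
  rw [h, RingHom.map_det]
  congr 1
  ext i j
  by_cases hij : i = j
  · subst hij
    simp [Matrix.charmatrix_apply_eq, Matrix.sub_apply, Matrix.smul_apply, Matrix.one_apply]
  · simp [Matrix.charmatrix_apply_ne _ _ _ hij, Matrix.sub_apply, Matrix.smul_apply,
      Matrix.one_apply_ne hij]

set_option maxHeartbeats 1600000 in
/-- Lemma: if `ℓ ≡ 5 (mod 8)` is prime, `r, m` are positive, and `Sp_{2m}(𝔽_ℓ)` has an
element of exact order `2^r`, then `2^(r-1) ≤ 2m`. -/
theorem two_pow_order_bound_symplectic (ℓ : ℕ) [Fact (Nat.Prime ℓ)] (h5 : ℓ % 8 = 5)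
    (r m : ℕ) (hr : 0 < r) (hm : 0 < m)
    (g : Matrix.symplecticGroup (Fin m) (ZMod ℓ))
    (hg : orderOf g = 2 ^ r) :
    2 ^ (r - 1) ≤ 2 * m := by
  classical
  by_cases hr3 : r < 3
  · have : 2 ^ (r-1) ≤ 2 ^ 1 := Nat.pow_le_pow_right (by norm_num) (by omega)
    omega
  push_neg at hr3
  have hp : Nat.Prime ℓ := Fact.out
  have hℓ2 : ℓ ≠ 2 := by intro h; rw [h] at h5; norm_num at h5
  set K := AlgebraicClosure (ZMod ℓ) with hK
  have h2K : (2 : K) ≠ 0 := by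
    intro h
    have h' : ((2 : ℕ) : K) = 0 := by exact_mod_cast h
    have := (CharP.cast_eq_zero_iff K ℓ 2).mp h'
    exact hℓ2 ((Nat.prime_dvd_prime_iff_eq hp Nat.prime_two).mp this)
  set f : ZMod ℓ →+* K := algebraMap (ZMod ℓ) K with hf
  set M : Matrix (Fin m ⊕ Fin m) (Fin m ⊕ Fin m) (ZMod ℓ) := g.1 with hM
  have hordM : orderOf M = 2 ^ r := by rw [hM, orderOf_submonoid g, hg]
  have hM1 : M ^ (2 ^ r) = 1 := by rw [← hordM]; exact pow_orderOf_eq_one M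
  have hM2 : M ^ (2 ^ (r - 1)) ≠ 1 := by
    intro h
    have hdvd := orderOf_dvd_of_pow_eq_one h
    rw [hordM] at hdvd
    have := Nat.le_of_dvd (Nat.pow_pos (by norm_num)) hdvd
    have h2 : (2:ℕ) ^ (r-1) < 2 ^ r := Nat.pow_lt_pow_right (by norm_num) (by omega)
    omega
  set M' : Matrix (Fin m ⊕ Fin m) (Fin m ⊕ Fin m) K := M.map f with hM'
  have hmapmul : ∀ k : ℕ, (M ^ k).map f = M' ^ k := by
    intro k
    have := map_pow (f.mapMatrix) M k
    simpa [RingHom.mapMatrix_apply] using this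
  have hM'1 : M' ^ (2 ^ r) = 1 := by rw [← hmapmul, hM1]; simp
  have hM'2 : M' ^ (2 ^ (r - 1)) ≠ 1 := by
    intro h
    rw [← hmapmul] at h
    apply hM2
    have hinj : Function.Injective f := f.injective
    have : (M ^ (2^(r-1))).map f = (1 : Matrix _ _ (ZMod ℓ)).map f := by
      rw [h]; simp
    exact Matrix.map_injective hinj this
  -- characteristic polynomial
  set P : Polynomial (ZMod ℓ) := M.charpoly with hP
  set p' : Polynomial K := P.map f with hp'
  have hcharM' : M'.charpoly = p' := by rw [hM', hp', hP, Matrix.charpoly_map]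
  have hp'0 : p' ≠ 0 := by rw [← hcharM']; exact (Matrix.charpoly_monic M').ne_zero
  set N' : ℕ := 2 ^ (r - 1) with hN'
  have hNN : N' + N' = 2 ^ r := by
    have hrr : r = (r - 1) + 1 := by omega
    rw [hN']
    calc 2 ^ (r-1) + 2 ^ (r-1) = 2 ^ ((r-1)+1) := by ring
      _ = 2 ^ r := by rw [← hrr]
  set μ : Polynomial K := minpoly K M' with hμ
  have hμdvd : μ ∣ ((X : Polynomial K) ^ N' - 1) * (X ^ N' + 1) := by
    apply minpoly.dvd
    rw [show ((X:Polynomial K) ^ N' - 1) * (X ^ N' + 1) = X ^ (N' + N') - 1 from by ring,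
      map_sub, _root_.map_one, _root_.map_pow, aeval_X, hNN, hM'1, sub_self]
  have hμnotdvd : ¬ μ ∣ ((X : Polynomial K) ^ N' - 1) := by
    rintro ⟨c, hc⟩
    apply hM'2
    have h0 : Polynomial.aeval M' ((X:Polynomial K) ^ N' - 1) = 0 := by
      rw [hc, _root_.map_mul, hμ, minpoly.aeval, zero_mul]
    rw [map_sub, _root_.map_one, _root_.map_pow, aeval_X] at h0
    exact sub_eq_zero.mp h0
  have hcop : IsCoprime ((X:Polynomial K) ^ N' - 1) ((X:Polynomial K) ^ N' + 1) := by
    refine ⟨-(C (2⁻¹ : K)), C (2⁻¹ : K), ?_⟩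
    have h1 : -(C (2⁻¹:K)) * (X ^ N' - 1) + C (2⁻¹:K) * (X ^ N' + 1) = C (2⁻¹:K) * 2 := by ring
    rw [h1, ← map_ofNat (C : K →+* Polynomial K) 2, ← C_mul, inv_mul_cancel₀ h2K, C_1]
  have hnotcop : ¬ IsCoprime μ ((X:Polynomial K) ^ N' + 1) :=
    fun h => hμnotdvd (h.dvd_of_dvd_mul_right hμdvd)
  set d : Polynomial K := EuclideanDomain.gcd μ ((X:Polynomial K) ^ N' + 1) with hd
  have hdunit : ¬ IsUnit d := fun h => hnotcop (EuclideanDomain.gcd_isUnit_iff.mp h)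
  have hddeg : d.degree ≠ 0 := fun h => hdunit (Polynomial.isUnit_iff_degree_eq_zero.mpr h)
  obtain ⟨ζ, hζd⟩ := IsAlgClosed.exists_root d hddeg
  have hζμ : μ.IsRoot ζ := hζd.dvd (EuclideanDomain.gcd_dvd_left _ _)
  have hζB : ζ ^ N' = -1 := by
    have h := hζd.dvd (EuclideanDomain.gcd_dvd_right μ ((X:Polynomial K) ^ N' + 1))
    rw [Polynomial.IsRoot, eval_add, eval_pow, eval_X, eval_one] at h
    exact eq_neg_of_add_eq_zero_left h
  have hζroot : p'.eval ζ = 0 := by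
    have h := hζμ.dvd (hμ ▸ Matrix.minpoly_dvd_charpoly M')
    rwa [hcharM'] at h
  have hζ2r : ζ ^ (2 ^ r) = 1 := by
    rw [← hNN, pow_add, hζB]; norm_num
  have hζ0 : ζ ≠ 0 := by
    rintro rfl
    rw [zero_pow (by positivity)] at hζ2r
    exact zero_ne_one hζ2r
  have hm1ne : (-1 : K) ≠ 1 := by
    intro h; apply h2K; linear_combination -h
  have hordζ : orderOf ζ = 2 ^ r := by
    have hnot : ζ ^ 2 ^ (r - 1) ≠ 1 := by
      rw [← hN', hζB]; exact hm1ne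
    have hfin : ζ ^ 2 ^ ((r - 1) + 1) = 1 := by
      rw [show (r-1)+1 = r by omega]; exact hζ2r
    have ho := orderOf_eq_prime_pow hnot hfin
    rw [ho]; congr 1; omega
  -- Frobenius
  haveI hKchar : CharP K ℓ := inferInstance
  haveI : ExpChar K ℓ := ExpChar.prime hp
  have hfrob : ∀ x : K, p'.eval x = 0 → p'.eval (x ^ ℓ) = 0 := by
    intro x hx
    have hcomp : (frobenius K ℓ).comp f = f := by
      ext c
      simp only [RingHom.comp_apply, frobenius_def]
      rw [← _root_.map_pow, ZMod.pow_card]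
    rw [hp', Polynomial.eval_map] at hx ⊢
    have h1 := Polynomial.hom_eval₂ P f (frobenius K ℓ) x
    rw [hx, _root_.map_zero, hcomp, frobenius_def] at h1
    exact h1.symm
  have hIter : ∀ (i : ℕ) (x : K), p'.eval x = 0 → p'.eval (x ^ (ℓ ^ i)) = 0 := by
    intro i
    induction i with
    | zero => intro x hx; simpa using hx
    | succ i ih =>
      intro x hx
      have h := hfrob _ (ih x hx)
      rwa [← pow_mul, ← pow_succ] at h
  -- symplectic reciprocity
  set J' : Matrix (Fin m ⊕ Fin m) (Fin m ⊕ Fin m) K := Matrix.J (Fin m) K with hJ'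
  have hJmap : (Matrix.J (Fin m) (ZMod ℓ)).map f = J' := by
    rw [hJ']
    ext i j
    cases i <;> cases j <;>
      simp [Matrix.J, Matrix.fromBlocks, Matrix.one_apply, Matrix.neg_apply, apply_ite f]
  have hsymK : M' * J' * M'ᵀ = J' := by
    have hmem := g.2
    rw [SymplecticGroup.mem_iff] at hmem
    have hc := congrArg (fun A => A.map f) hmem
    simp only [Matrix.map_mul, Matrix.transpose_map, hJmap] at hc
    rw [← hM'] at hc
    exact hc
  set Minv : Matrix (Fin m ⊕ Fin m) (Fin m ⊕ Fin m) K := M' ^ (2 ^ r - 1) with hMinvdef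
  have hpow1 : 2 ^ r - 1 + 1 = 2 ^ r := by
    have : 0 < 2 ^ r := Nat.pow_pos (show 0 < 2 by norm_num); omega
  have hMinv1 : M' * Minv = 1 := by
    rw [hMinvdef, ← pow_succ', hpow1]; exact hM'1
  have hMinv2 : Minv * M' = 1 := by
    rw [hMinvdef, ← pow_succ, hpow1]; exact hM'1
  have hJJ : J' * (-J') = (1 : Matrix (Fin m ⊕ Fin m) (Fin m ⊕ Fin m) K) := by
    rw [mul_neg, hJ', Matrix.J_squared, neg_neg]
  have hJJ' : (-J') * J' = (1 : Matrix (Fin m ⊕ Fin m) (Fin m ⊕ Fin m) K) := by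
    rw [neg_mul, hJ', Matrix.J_squared, neg_neg]
  have hdet_conj : ∀ (Pm A Qm : Matrix (Fin m ⊕ Fin m) (Fin m ⊕ Fin m) K), Pm * Qm = 1 →
      (Pm * A * Qm).det = A.det := by
    intro Pm A Qm h
    have h1 : Pm.det * Qm.det = 1 := by rw [← Matrix.det_mul, h, Matrix.det_one]
    rw [Matrix.det_mul, Matrix.det_mul]
    calc Pm.det * A.det * Qm.det = A.det * (Pm.det * Qm.det) := by ring
      _ = A.det := by rw [h1, mul_one]
  have hMT : M'ᵀ = (-J') * Minv * J' := by
    have h1 : J' * M'ᵀ = Minv * J' := by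
      calc J' * M'ᵀ = (Minv * M') * (J' * M'ᵀ) := by rw [hMinv2, one_mul]
        _ = Minv * (M' * J' * M'ᵀ) := by simp only [mul_assoc]
        _ = Minv * J' := by rw [hsymK]
    calc M'ᵀ = 1 * M'ᵀ := (one_mul _).symm
      _ = ((-J') * J') * M'ᵀ := by rw [hJJ']
      _ = (-J') * (J' * M'ᵀ) := by rw [mul_assoc]
      _ = (-J') * (Minv * J') := by rw [h1]
      _ = (-J') * Minv * J' := by rw [mul_assoc]
  have hrec : ∀ x : K, x ≠ 0 → p'.eval x = 0 → p'.eval x⁻¹ = 0 := by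
    intro x hx h0
    rw [← hcharM', eval_charpoly''] at h0 ⊢
    have hT : (x • (1 : Matrix (Fin m ⊕ Fin m) (Fin m ⊕ Fin m) K) - M'ᵀ).det = 0 := by
      have he : x • (1 : Matrix (Fin m ⊕ Fin m) (Fin m ⊕ Fin m) K) - M'ᵀ = (x • 1 - M')ᵀ := by
        rw [Matrix.transpose_sub, Matrix.transpose_smul, Matrix.transpose_one]
      rw [he, Matrix.det_transpose, h0]
    have h2m : J' * M'ᵀ * (-J') = Minv := by
      rw [hMT]
      calc J' * ((-J') * Minv * J') * (-J') = (J' * (-J')) * Minv * (J' * (-J')) := by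
            simp only [mul_assoc]
        _ = Minv := by rw [hJJ, one_mul, mul_one]
    have heq : J' * (x • (1 : Matrix (Fin m ⊕ Fin m) (Fin m ⊕ Fin m) K) - M'ᵀ) * (-J')
        = x • 1 - Minv := by
      rw [Matrix.mul_sub, Matrix.sub_mul, h2m, mul_smul_comm, mul_one, smul_mul_assoc, hJJ]
    have hMinvdet : (x • (1 : Matrix (Fin m ⊕ Fin m) (Fin m ⊕ Fin m) K) - Minv).det = 0 := by
      rw [← heq, hdet_conj _ _ _ hJJ, hT]
    have hkey : x⁻¹ • (1 : Matrix (Fin m ⊕ Fin m) (Fin m ⊕ Fin m) K) - M'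
        = (-x⁻¹) • (M' * (x • 1 - Minv)) := by
      rw [Matrix.mul_sub, mul_smul_comm, mul_one, hMinv1, smul_sub, smul_smul,
        show -x⁻¹ * x = -1 from by rw [neg_mul, inv_mul_cancel₀ hx], neg_smul, neg_smul, one_smul]
      abel
    rw [hkey, Matrix.det_smul, Matrix.det_mul, hMinvdet, mul_zero, mul_zero]
  -- counting roots
  set t : ℕ := 2 ^ (r - 2) with ht
  have hζinvroot : p'.eval (ζ ^ (2 ^ r - 1)) = 0 := by
    have h1 : ζ * ζ ^ (2 ^ r - 1) = 1 := by
      rw [← pow_succ', hpow1]; exact hζ2r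
    have h2 : ζ ^ (2 ^ r - 1) = ζ⁻¹ := (inv_eq_of_mul_eq_one_right h1).symm
    rw [h2]; exact hrec ζ hζ0 hζroot
  set ψ : ℕ → K := fun k => if k < t then ζ ^ (ℓ ^ k) else ζ ^ ((2 ^ r - 1) * ℓ ^ (k - t)) with hψ
  have hψroot : ∀ k, p'.eval (ψ k) = 0 := by
    intro k
    rw [hψ]
    by_cases hkt : k < t
    · simp only [if_pos hkt]; exact hIter k ζ hζroot
    · simp only [if_neg hkt]
      have h := hIter (k - t) (ζ ^ (2 ^ r - 1)) hζinvroot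
      rwa [← pow_mul] at h
  have hMem : ∀ k ∈ Finset.range (2 * t), ψ k ∈ p'.roots.toFinset := by
    intro k _
    rw [Multiset.mem_toFinset, Polynomial.mem_roots']
    exact ⟨hp'0, hψroot k⟩
  have hmodeq : ∀ a b : ℕ, ζ ^ a = ζ ^ b → a ≡ b [MOD 2 ^ r] := by
    intro a b h
    have hu : (Units.mk0 ζ hζ0) ^ a = (Units.mk0 ζ hζ0) ^ b := Units.ext (by simpa using h)
    have hord : orderOf (Units.mk0 ζ hζ0) = 2 ^ r := by
      rw [← orderOf_units]; exact hordζ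
    have h' := pow_eq_pow_iff_modEq.mp hu
    rwa [hord] at h'
  have hcopl : ∀ i : ℕ, Nat.Coprime (2 ^ r) (ℓ ^ i) :=
    fun i => Nat.Coprime.pow _ _ ((Nat.coprime_primes Nat.prime_two hp).mpr (Ne.symm hℓ2))
  have hkey2 : ∀ i j : ℕ, i ≤ j → j < t → ℓ ^ i ≡ ℓ ^ j [MOD 2 ^ r] → i = j := by
    intro i j hij hj h
    have h1 : ℓ ^ i * 1 ≡ ℓ ^ i * ℓ ^ (j - i) [MOD 2 ^ r] := by
      rw [mul_one, ← pow_add, show i + (j - i) = j by omega]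
      exact h
    have h2 := Nat.ModEq.cancel_left_of_coprime (hcopl i) h1
    have h3 := key_order ℓ r (j - i) h5 hr3 (by omega) h2.symm
    omega
  have hmix : ∀ i j : ℕ, ℓ ^ i ≡ (2 ^ r - 1) * ℓ ^ j [MOD 2 ^ r] → False := by
    intro i j h
    have h8 : (8 : ℕ) ∣ 2 ^ r := by
      have h3 : (2 : ℕ) ^ 3 ∣ 2 ^ r := pow_dvd_pow 2 hr3
      norm_num at h3; exact h3
    have h' := Nat.ModEq.of_dvd h8 h
    have h2r8 : 8 ≤ 2 ^ r := Nat.le_of_dvd (by positivity) h8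
    have h7 : (2 ^ r - 1) % 8 = 7 := by omega
    rw [Nat.ModEq, Nat.mul_mod, h7] at h'
    rcases pow8aux ℓ h5 i with e1 | e1 <;> rcases pow8aux ℓ h5 j with e2 | e2 <;>
      rw [e1, e2] at h' <;> norm_num at h'
  have hco21 : Nat.Coprime (2 ^ r) (2 ^ r - 1) := by
    have hev : (2:ℕ) ∣ 2 ^ r := dvd_pow_self 2 (by omega)
    have hodd : Odd (2 ^ r - 1) := Nat.odd_iff.mpr (by omega)
    exact Nat.Coprime.pow_left _ (Nat.coprime_two_left.mpr hodd)
  have hinj : Set.InjOn ψ (Finset.range (2 * t)) := by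
    intro a ha b hb hab
    simp only [Finset.coe_range, Set.mem_Iio] at ha hb
    rw [hψ] at hab
    by_cases h1 : a < t <;> by_cases h2 : b < t
    · simp only [if_pos h1, if_pos h2] at hab
      have hm := hmodeq _ _ hab
      rcases le_total a b with hle | hle
      · exact hkey2 a b hle h2 hm
      · exact (hkey2 b a hle h1 hm.symm).symm
    · simp only [if_pos h1, if_neg h2] at hab
      exact absurd (hmodeq _ _ hab) (fun hh => hmix _ _ hh)
    · simp only [if_neg h1, if_pos h2] at hab
      exact absurd (hmodeq _ _ hab).symm (fun hh => hmix _ _ hh)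
    · simp only [if_neg h1, if_neg h2] at hab
      have hmm := hmodeq _ _ hab
      have h3 := Nat.ModEq.cancel_left_of_coprime hco21 hmm
      rcases le_total (a - t) (b - t) with hle | hle
      · have h4 := hkey2 _ _ hle (by omega) h3; omega
      · have h4 := hkey2 _ _ hle (by omega) h3.symm; omega
  have hcard := Finset.card_le_card_of_injOn ψ hMem hinj
  rw [Finset.card_range] at hcard
  have hc2 : p'.roots.toFinset.card ≤ Multiset.card p'.roots := p'.roots.toFinset_card_le
  have hc3 : Multiset.card p'.roots ≤ p'.natDegree := p'.card_roots'
  have hdeg : p'.natDegree = m + m := by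
    rw [← hcharM', Matrix.charpoly_natDegree_eq_dim]
    simp
  have hpowt : 2 ^ (r - 1) = 2 * t := by
    rw [ht]
    calc 2 ^ (r - 1) = 2 ^ ((r-2)+1) := by congr 1; omega
      _ = 2 * 2 ^ (r - 2) := by rw [pow_succ']
  omega
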